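/- For every s ∈ ℂ, on (𝔳 × 𝔷) ∖ {(0,0)} one has □ K_s = 2sq K_{s−1} + 4s(s−1) |Z|² K_{s−2}. -/

import Mathlib

open scoped InnerProductSpace

noncomputable section

/-- The left-invariant vector field on `N = 𝔳 × 𝔷` associated to `S ∈ 𝔳`:
`(Sf)(X,Z) = ∂_𝔳 f(X,Z)[S] - ½ ∂_𝔷 f(X,Z)[[S,X]]`. -/
def vfV {V W : Type*} [NormedAddCommGroup V] [InnerProductSpace ℝ V]
    [NormedAddCommGroup W] [InnerProductSpace ℝ W]
    (br : V →ₗ[ℝ] V →ₗ[ℝ] W) (S : V) (f : V × W → ℂ) : V × W → ℂ :=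
  fun x => fderiv ℝ f x (S, 0) - (1/2 : ℂ) * fderiv ℝ f x (0, br S x.1)

/-- The left-invariant vector field associated to `T ∈ 𝔷`: `(Tf)(X,Z) = ∂_𝔷 f(X,Z)[T]`. -/
def vfW {V W : Type*} [NormedAddCommGroup V] [InnerProductSpace ℝ V]
    [NormedAddCommGroup W] [InnerProductSpace ℝ W]
    (T : W) (f : V × W → ℂ) : V × W → ℂ :=
  fun x => fderiv ℝ f x (0, T)

/-- Sub-Laplacian `∑_{j ∈ fs} S_j²` associated to a family of vectors in `𝔳`. -/
def subLap {V W : Type*} [NormedAddCommGroup V] [InnerProductSpace ℝ V]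
    [NormedAddCommGroup W] [InnerProductSpace ℝ W] {ι : Type*}
    (br : V →ₗ[ℝ] V →ₗ[ℝ] W) (fs : Finset ι) (S : ι → V) (f : V × W → ℂ) : V × W → ℂ :=
  fun x => ∑ j ∈ fs, vfV br (S j) (vfV br (S j) f) x

/-- Central Laplacian `∑_{j ∈ fs} T_j²` associated to a family of vectors in `𝔷`. -/
def boxLap {V W : Type*} [NormedAddCommGroup V] [InnerProductSpace ℝ V]
    [NormedAddCommGroup W] [InnerProductSpace ℝ W] {ι : Type*}
    (fs : Finset ι) (T : ι → W) (f : V × W → ℂ) : V × W → ℂ :=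
  fun x => ∑ j ∈ fs, vfW (T j) (vfW (T j) f) x

/-- The norm function `K(X,Z) = |X|⁴ + |Z|²`. -/
def Kfun {V W : Type*} [NormedAddCommGroup V] [NormedAddCommGroup W] (x : V × W) : ℝ :=
  ‖x.1‖^4 + ‖x.2‖^2

/-- The complex power `K_s = K^s`. -/
def Ks {V W : Type*} [NormedAddCommGroup V] [NormedAddCommGroup W] (s : ℂ) (x : V × W) : ℂ :=
  (Kfun x : ℂ) ^ s

/-- `ρ = (p+2q)/2` as a complex number. -/
def rhoC (p q : ℕ) : ℂ := ((p : ℂ) + 2*q)/2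

/-- `B(s) = 4s(4s+2ρ-2)`. -/
def Bc (p q : ℕ) (s : ℂ) : ℂ := 4*s*(4*s + 2*(rhoC p q) - 2)

/-- The component `X₂` of `X ∈ 𝔳` in `𝔳₂ = 𝔳₁ᗮ`. -/
def projPerp {V : Type*} [NormedAddCommGroup V] [InnerProductSpace ℝ V]
    [FiniteDimensional ℝ V] (V₁ : Submodule ℝ V) (X : V) : V :=
  (Submodule.orthogonalProjection V₁ᗮ X : V)


section boxAux
variable {V W : Type*} [NormedAddCommGroup V] [InnerProductSpace ℝ V]
    [NormedAddCommGroup W] [InnerProductSpace ℝ W]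

/-- The derivative of `Kfun`. -/
def DKder (x : V × W) : (V × W) →L[ℝ] ℝ :=
  (2 * ‖x.1‖^2) • ((2 • (innerSL ℝ x.1)).comp (ContinuousLinearMap.fst ℝ V W))
    + (2 • (innerSL ℝ x.2)).comp (ContinuousLinearMap.snd ℝ V W)

lemma DKder_apply (x v : V × W) :
    DKder x v = 4 * ‖x.1‖^2 * ⟪x.1, v.1⟫_ℝ + 2 * ⟪x.2, v.2⟫_ℝ := by
  simp [DKder]; ring

lemma hasFDerivAt_Kfun (x : V × W) : HasFDerivAt (Kfun : V × W → ℝ) (DKder x) x := by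
  have h1 : HasFDerivAt (fun y : V × W => ‖y.1‖^2)
      (2 • (innerSL ℝ x.1).comp (ContinuousLinearMap.fst ℝ V W)) x :=
    (hasFDerivAt_fst).norm_sq
  have h2 : HasFDerivAt (fun y : V × W => ‖y.2‖^2)
      (2 • (innerSL ℝ x.2).comp (ContinuousLinearMap.snd ℝ V W)) x :=
    (hasFDerivAt_snd).norm_sq
  have h3 := (h1.mul h1).add h2
  have hfun : (Kfun : V × W → ℝ) = fun y => ‖y.1‖^2 * ‖y.1‖^2 + ‖y.2‖^2 := by
    funext y; simp [Kfun]; ring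
  rw [hfun]
  refine h3.congr_fderiv ?_
  refine ContinuousLinearMap.ext fun v => ?_
  simp [DKder]
  ring

lemma Kfun_pos {x : V × W} (hx : x ≠ 0) : 0 < Kfun x := by
  have h : x.1 ≠ 0 ∨ x.2 ≠ 0 := by
    by_contra h; push_neg at h; exact hx (Prod.ext h.1 h.2)
  have h1 : (0:ℝ) ≤ ‖x.1‖^4 := by positivity
  have h2 : (0:ℝ) ≤ ‖x.2‖^2 := by positivity
  rcases h with h | h
  · have : 0 < ‖x.1‖^4 := by
      have := norm_pos_iff.mpr h; positivity
    simp only [Kfun]; linarith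
  · have : 0 < ‖x.2‖^2 := by
      have := norm_pos_iff.mpr h; positivity
    simp only [Kfun]; linarith

/-- The derivative of `Ks s`. -/
def DKs (s : ℂ) (x : V × W) : (V × W) →L[ℝ] ℂ :=
  (s * ((Kfun x : ℝ) : ℂ) ^ (s - 1)) • (Complex.ofRealCLM.comp (DKder x))

lemma hasFDerivAt_Ks {x : V × W} (hx : x ≠ 0) (s : ℂ) :
    HasFDerivAt (Ks s : V × W → ℂ) (DKs s x) x := by
  have hK : HasFDerivAt (fun y : V × W => ((Kfun y : ℝ) : ℂ))
      (Complex.ofRealCLM.comp (DKder x)) x :=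
    Complex.ofRealCLM.hasFDerivAt.comp x (hasFDerivAt_Kfun x)
  have h0 : ((Kfun x : ℝ) : ℂ) ∈ Complex.slitPlane :=
    Complex.ofReal_mem_slitPlane.mpr (Kfun_pos hx)
  have := ((Complex.hasStrictDerivAt_cpow_const (c := s) h0).hasDerivAt).comp_hasFDerivAt x hK
  exact this

lemma vfW_Ks_eval {x : V × W} (hx : x ≠ 0) (s : ℂ) (t : W) :
    fderiv ℝ (Ks s : V × W → ℂ) x (0, t)
      = s * ((Kfun x : ℝ) : ℂ) ^ (s - 1) * ((2 * ⟪x.2, t⟫_ℝ : ℝ) : ℂ) := by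
  rw [(hasFDerivAt_Ks hx s).fderiv]
  simp [DKs, DKder_apply]

lemma vfW_vfW_Ks (s : ℂ) (t : W) {x : V × W} (hx : x ≠ 0) :
    vfW t (vfW t (Ks s)) x
      = s * (s-1) * ((Kfun x : ℝ) : ℂ) ^ (s - 2) * ((2 * ⟪x.2, t⟫_ℝ : ℝ) : ℂ)
          * ((2 * ⟪x.2, t⟫_ℝ : ℝ) : ℂ)
        + s * ((Kfun x : ℝ) : ℂ) ^ (s - 1) * ((2 * ⟪t, t⟫_ℝ : ℝ) : ℂ) := by
  set g : V × W → ℂ :=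
    fun y => (s * Ks (s-1) y) * (((2 * ⟪y.2, t⟫_ℝ : ℝ) : ℂ)) with hgdef
  have hopen : {y : V × W | y ≠ 0} ∈ nhds x := isOpen_ne.mem_nhds hx
  have hEv : vfW t (Ks s) =ᶠ[nhds x] g := by
    filter_upwards [hopen] with y hy
    exact vfW_Ks_eval hy s t
  set LB : (V × W) →L[ℝ] ℂ :=
    Complex.ofRealCLM.comp
      ((2:ℝ) • ((innerSL ℝ t).comp (ContinuousLinearMap.snd ℝ V W))) with hLB
  have hB : HasFDerivAt (fun y : V × W => ((2 * ⟪y.2, t⟫_ℝ : ℝ) : ℂ)) LB x := by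
    refine LB.hasFDerivAt.congr_of_eventuallyEq (Filter.Eventually.of_forall fun y => ?_)
    simp [hLB, real_inner_comm]
  have hA : HasFDerivAt (Ks (s-1) : V × W → ℂ) (DKs (s-1) x) x := hasFDerivAt_Ks hx (s-1)
  have hprod := (hA.const_mul s).mul hB
  have step1 : vfW t (vfW t (Ks s)) x = fderiv ℝ g x (0, t) := by
    show fderiv ℝ (vfW t (Ks s)) x (0, t) = _
    rw [hEv.fderiv_eq]
  rw [step1, show fderiv ℝ g x = _ from hprod.fderiv]
  have h2 : s - 1 - 1 = s - 2 := by ring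
  simp [hLB, DKs, DKder_apply, Ks, h2]
  ring

end boxAux

/-- `□ K_s = 2sq K_{s-1} + 4s(s-1) |Z|² K_{s-2}` on `(𝔳 × 𝔷) ∖ {(0,0)}`. -/
theorem boxKs {V W : Type*} [NormedAddCommGroup V] [InnerProductSpace ℝ V]
    [NormedAddCommGroup W] [InnerProductSpace ℝ W]
    [FiniteDimensional ℝ V] [FiniteDimensional ℝ W]
    (p q : ℕ) (hp : Module.finrank ℝ V = p) (hq : Module.finrank ℝ W = q)
    (br : V →ₗ[ℝ] V →ₗ[ℝ] W) (hbr : ∀ X : V, br X X = 0)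
    (J : W →ₗ[ℝ] V →ₗ[ℝ] V)
    (hJ : ∀ (z : W) (X Y : V), ⟪J z X, Y⟫_ℝ = ⟪z, br X Y⟫_ℝ)
    (hH : ∀ (z : W) (X : V), J z (J z X) = (-16 * ‖z‖^2) • X)
    (S : OrthonormalBasis (Fin p) ℝ V)
    (T : OrthonormalBasis (Fin q) ℝ W)
    (s : ℂ) :
    ∀ x : V × W, x ≠ 0 →
      boxLap Finset.univ (fun j => T j) (Ks s) x
        = 2*s*(q : ℂ) * Ks (s-1) x + 4*s*(s-1) * (‖x.2‖ : ℂ)^2 * Ks (s-2) x := by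

  intro x hx
  have hTT : ∀ j : Fin q, ⟪T j, T j⟫_ℝ = 1 := fun j => by
    rw [real_inner_self_eq_norm_sq, T.orthonormal.1 j]; norm_num
  have hsum : ∑ j : Fin q, (⟪x.2, T j⟫_ℝ * ⟪x.2, T j⟫_ℝ) = ‖x.2‖^2 := by
    have h := T.sum_inner_mul_inner x.2 x.2
    rw [real_inner_self_eq_norm_sq] at h
    calc ∑ j : Fin q, ⟪x.2, T j⟫_ℝ * ⟪x.2, T j⟫_ℝ
        = ∑ j : Fin q, ⟪x.2, T j⟫_ℝ * ⟪T j, x.2⟫_ℝ := by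
          refine Finset.sum_congr rfl fun j _ => ?_
          rw [real_inner_comm x.2 (T j)]
      _ = ‖x.2‖^2 := h
  show ∑ j : Fin q, vfW (T j) (vfW (T j) (Ks s)) x = _
  calc ∑ j : Fin q, vfW (T j) (vfW (T j) (Ks s)) x
      = ∑ j : Fin q,
          ((4*(s*(s-1)*((Kfun x : ℝ):ℂ)^(s-2)))
              * ((⟪x.2, T j⟫_ℝ * ⟪x.2, T j⟫_ℝ : ℝ) : ℂ)
            + 2*s*((Kfun x : ℝ):ℂ)^(s-1)) := by
        refine Finset.sum_congr rfl fun j _ => ?_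
        rw [vfW_vfW_Ks s (T j) hx, hTT j]
        push_cast
        ring
    _ = (4*(s*(s-1)*((Kfun x : ℝ):ℂ)^(s-2))) * ((‖x.2‖^2 : ℝ) : ℂ)
          + (q : ℂ) * (2*s*((Kfun x : ℝ):ℂ)^(s-1)) := by
        rw [Finset.sum_add_distrib, ← Finset.mul_sum, ← Complex.ofReal_sum, hsum,
          Finset.sum_const, Finset.card_univ, Fintype.card_fin, nsmul_eq_mul]
    _ = 2*s*(q : ℂ) * Ks (s-1) x + 4*s*(s-1) * (‖x.2‖ : ℂ)^2 * Ks (s-2) x := by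
        simp only [Ks]
        push_cast
        ring
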